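/- Let G and G' be finite groups whose orders |G| and |G'| are coprime. Then for every natural number m, a_m(G × G') = Σ_{d ∣ m} a_d(G) · a_{m/d}(G'), where the sum is over positive divisors d of m. -/

import Mathlib

/-- `subCount G m` is the number of subgroups of `G` of order `m`,
i.e. the coefficient `a_m(G)` of the zeta function `ζ_G(s) = Σ_m a_m(G) m^{-s}`. -/
noncomputable def subCount (G : Type*) [Group G] (m : ℕ) : ℕ :=
  Nat.card {H : Subgroup G // Nat.card H = m}

section Aux

variable {G G' : Type*} [Group G] [Group G'] [Finite G] [Finite G']

private lemma aux_fst_mem (h : Nat.Coprime (Nat.card G) (Nat.card G'))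
    (H : Subgroup (G × G')) {a : G} {b : G'} (hab : (a, b) ∈ H) : (a, 1) ∈ H := by
  set t : ℕ := (orderOf b) ^ Nat.totient (orderOf a) with ht
  have hco : Nat.Coprime (orderOf b) (orderOf a) :=
    ((Nat.Coprime.coprime_dvd_left (orderOf_dvd_natCard a) h).coprime_dvd_right
      (orderOf_dvd_natCard b)).symm
  have hat : a ^ t = a := by
    have : t ≡ 1 [MOD orderOf a] := Nat.ModEq.pow_totient hco
    calc a ^ t = a ^ 1 := pow_eq_pow_iff_modEq.2 this
    _ = a := pow_one a
  have hbt : b ^ t = 1 := by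
    have hpos : 0 < Nat.totient (orderOf a) := Nat.totient_pos.2 (orderOf_pos a)
    exact orderOf_dvd_iff_pow_eq_one.1 (dvd_pow_self (orderOf b) hpos.ne')
  have : ((a, b) : G × G') ^ t = (a, 1) := by
    rw [Prod.pow_mk, hat, hbt]
  exact this ▸ H.pow_mem hab t

private lemma aux_snd_mem (h : Nat.Coprime (Nat.card G) (Nat.card G'))
    (H : Subgroup (G × G')) {a : G} {b : G'} (hab : (a, b) ∈ H) : (1, b) ∈ H := by
  set t : ℕ := (orderOf a) ^ Nat.totient (orderOf b) with ht
  have hco : Nat.Coprime (orderOf a) (orderOf b) :=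
    (Nat.Coprime.coprime_dvd_left (orderOf_dvd_natCard a) h).coprime_dvd_right
      (orderOf_dvd_natCard b)
  have hbt : b ^ t = b := by
    have : t ≡ 1 [MOD orderOf b] := Nat.ModEq.pow_totient hco
    calc b ^ t = b ^ 1 := pow_eq_pow_iff_modEq.2 this
    _ = b := pow_one b
  have hat : a ^ t = 1 := by
    have hpos : 0 < Nat.totient (orderOf b) := Nat.totient_pos.2 (orderOf_pos b)
    exact orderOf_dvd_iff_pow_eq_one.1 (dvd_pow_self (orderOf a) hpos.ne')
  have : ((a, b) : G × G') ^ t = (1, b) := by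
    rw [Prod.pow_mk, hat, hbt]
  exact this ▸ H.pow_mem hab t

/-- Under the coprimality assumption, every subgroup of `G × G'` is a product. -/
private lemma aux_decomp (h : Nat.Coprime (Nat.card G) (Nat.card G'))
    (H : Subgroup (G × G')) :
    (H.map (MonoidHom.fst G G')).prod (H.map (MonoidHom.snd G G')) = H := by
  apply le_antisymm
  · rintro ⟨x, y⟩ ⟨hx, hy⟩
    simp only [Subgroup.mem_map] at hx hy
    obtain ⟨⟨a, b⟩, hab, rfl⟩ := hx
    obtain ⟨⟨c, d⟩, hcd, rfl⟩ := hy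
    have h1 : ((a, 1) : G × G') ∈ H := aux_fst_mem h H hab
    have h2 : ((1, d) : G × G') ∈ H := aux_snd_mem h H hcd
    have : ((a, 1) : G × G') * (1, d) = (a, d) := by simp
    exact this ▸ H.mul_mem h1 h2
  · rintro ⟨x, y⟩ hxy
    exact ⟨⟨(x, y), hxy, rfl⟩, ⟨(x, y), hxy, rfl⟩⟩

private lemma aux_map_fst (A : Subgroup G) (B : Subgroup G') :
    (A.prod B).map (MonoidHom.fst G G') = A := by
  ext x
  simp only [Subgroup.mem_map, Subgroup.mem_prod, MonoidHom.coe_fst]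
  constructor
  · rintro ⟨⟨a, b⟩, ⟨ha, _⟩, rfl⟩; exact ha
  · intro hx; exact ⟨(x, 1), ⟨hx, B.one_mem⟩, rfl⟩

private lemma aux_map_snd (A : Subgroup G) (B : Subgroup G') :
    (A.prod B).map (MonoidHom.snd G G') = B := by
  ext x
  simp only [Subgroup.mem_map, Subgroup.mem_prod, MonoidHom.coe_snd]
  constructor
  · rintro ⟨⟨a, b⟩, ⟨_, hb⟩, rfl⟩; exact hb
  · intro hx; exact ⟨(1, x), ⟨A.one_mem, hx⟩, rfl⟩

private lemma aux_card_prod (A : Subgroup G) (B : Subgroup G') :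
    Nat.card (A.prod B) = Nat.card A * Nat.card B := by
  rw [Nat.card_congr (A.prodEquiv B).toEquiv, Nat.card_prod]

private lemma natCard_sigma {ι : Type*} [Fintype ι] {f : ι → Type*} [∀ i, Finite (f i)] :
    Nat.card (Σ i, f i) = ∑ i, Nat.card (f i) := by
  classical
  haveI := fun i => Fintype.ofFinite (f i)
  simp [Nat.card_eq_fintype_card]

end Aux

/-- If `|G|` and `|G'|` are coprime then
`a_m(G × G') = Σ_{d ∣ m} a_d(G) · a_{m/d}(G')`. -/
theorem stmt_1 (G G' : Type*) [Group G] [Group G'] [Finite G] [Finite G']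
    (h : Nat.Coprime (Nat.card G) (Nat.card G')) :
    ∀ m : ℕ, subCount (G × G') m = ∑ d ∈ m.divisors, subCount G d * subCount G' (m / d) := by
  intro m
  haveI : Finite (Subgroup G) :=
    Finite.of_injective (fun H : Subgroup G => (H : Set G)) SetLike.coe_injective
  haveI : Finite (Subgroup G') :=
    Finite.of_injective (fun H : Subgroup G' => (H : Set G')) SetLike.coe_injective
  haveI : Finite (Subgroup (G × G')) :=
    Finite.of_injective (fun H : Subgroup (G × G') => (H : Set (G × G'))) SetLike.coe_injective
  -- step 1: subgroups of G × G' of order m ≃ pairs (A, B) with |A| * |B| = m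
  have e1 : {H : Subgroup (G × G') // Nat.card H = m} ≃
      {p : Subgroup G × Subgroup G' // Nat.card p.1 * Nat.card p.2 = m} :=
    { toFun := fun H => ⟨(H.1.map (MonoidHom.fst G G'), H.1.map (MonoidHom.snd G G')), by
        rw [← aux_card_prod, aux_decomp h, H.2]⟩
      invFun := fun p => ⟨p.1.1.prod p.1.2, by rw [aux_card_prod, p.2]⟩
      left_inv := fun H => Subtype.ext (aux_decomp h H.1)
      right_inv := fun p => Subtype.ext (Prod.ext (aux_map_fst _ _) (aux_map_snd _ _)) }
  -- step 2: such pairs ≃ sigma type over divisors of m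
  have e2 : {p : Subgroup G × Subgroup G' // Nat.card p.1 * Nat.card p.2 = m} ≃
      Σ d : {d : ℕ // d ∈ m.divisors},
        {A : Subgroup G // Nat.card A = d.1} × {B : Subgroup G' // Nat.card B = m / d.1} := by
    refine
    { toFun := fun p => ⟨⟨Nat.card p.1.1, ?_⟩, ⟨p.1.1, rfl⟩, ⟨p.1.2, ?_⟩⟩
      invFun := fun x => ⟨(x.2.1.1, x.2.2.1), ?_⟩
      left_inv := fun p => rfl
      right_inv := ?_ }
    · rw [Nat.mem_divisors]
      refine ⟨Dvd.intro _ p.2, ?_⟩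
      rw [← p.2]
      exact Nat.mul_ne_zero Nat.card_pos.ne' Nat.card_pos.ne'
    · show Nat.card (p.1.2 : Subgroup G') = m / Nat.card (p.1.1 : Subgroup G)
      exact (Nat.div_eq_of_eq_mul_right Nat.card_pos p.2.symm).symm
    · rw [x.2.1.2, x.2.2.2]
      exact Nat.mul_div_cancel' (Nat.mem_divisors.1 x.1.2).1
    · rintro ⟨⟨d, hd⟩, ⟨A, hA⟩, ⟨B, hB⟩⟩
      obtain rfl : Nat.card A = d := hA
      rfl
  rw [subCount, Nat.card_congr (e1.trans e2), natCard_sigma]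
  rw [← Finset.sum_coe_sort m.divisors (fun d => subCount G d * subCount G' (m / d))]
  refine Finset.sum_congr rfl fun d _ => ?_
  rw [Nat.card_prod]
  rfl
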